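/- Monotonicity of reachable gold brackets: for every valid configuration c and every action τ applicable at c, reach(τ(c)) ⊆ reach(c); that is, no transition can ever add new reachable gold brackets. -/

import Mathlib

/-!
Formalization of the span-based Structure/Label transition parsing system of
Cross & Huang (2016), "Span-Based Constituency Parsing with a Structure-Label
System and Provably Optimal Dynamic Oracles".

A configuration is `(z, σ, t)` where `z` is the step number, `σ` the stack of
span boundaries and `t` the set of brackets built so far.  A bracket is a
triple `(X, i, j)` with `X` a nonterminal label and `i < j ≤ n` a span.
-/

namespace SpanParser

structure Config (N : Type*) where
  z : ℕ
  σ : List ℕ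
  t : Finset (N × ℕ × ℕ)

variable {N : Type*}

/-- The span of a bracket. -/
def span (b : N × ℕ × ℕ) : ℕ × ℕ := b.2

/-- Top (rightmost) boundary of the stack. -/
def topJ (σ : List ℕ) : ℕ := σ.getLastD 0

/-- Second-to-top boundary of the stack. -/
def topI (σ : List ℕ) : ℕ := σ.dropLast.getLastD 0

/-- Parser actions: shift, combine, label-`X`, and nolabel. -/
inductive Action (N : Type*) where
  | sh : Action N
  | comb : Action N
  | label : N → Action N
  | nolabel : Action N

variable [DecidableEq N]

/-- Applicability of an action at a configuration (for sentence length `n`). -/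
def App (n : ℕ) (c : Config N) : Action N → Prop
  | .sh      => Even c.z ∧ c.σ ≠ [] ∧ topJ c.σ < n
  | .comb    => Even c.z ∧ 3 ≤ c.σ.length
  | .label _ => Odd c.z ∧ 2 ≤ c.σ.length
  | .nolabel => Odd c.z ∧ 2 ≤ c.σ.length ∧ c.z < 4 * n - 1

/-- The result `τ(c)` of applying action `τ` to configuration `c`. -/
def doAct (c : Config N) : Action N → Config N
  | .sh      => ⟨c.z + 1, c.σ ++ [topJ c.σ + 1], c.t⟩
  | .comb    => ⟨c.z + 1, c.σ.dropLast.dropLast ++ [topJ c.σ], c.t⟩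
  | .label X => ⟨c.z + 1, c.σ, insert (X, topI c.σ, topJ c.σ) c.t⟩
  | .nolabel => ⟨c.z + 1, c.σ, c.t⟩

/-- The initial configuration `(0, [0], ∅)`. -/
def initial (N : Type*) : Config N := ⟨0, [0], ∅⟩

/-- One transition step `c ⊢ c'`. -/
def Step (n : ℕ) (c c' : Config N) : Prop := ∃ a, App n c a ∧ c' = doAct c a

/-- `⊢*`: reflexive-transitive closure of the transition relation. -/
def Reaches (n : ℕ) : Config N → Config N → Prop := Relation.ReflTransGen (Step n)

/-- A configuration is valid if it is reachable from the initial configuration. -/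
def Valid (n : ℕ) (c : Config N) : Prop := Reaches n (initial N) c

/-- A final configuration: `σ = [0, n]` and `z = 4n - 2`. -/
def Final (n : ℕ) (c : Config N) : Prop := c.σ = [0, n] ∧ c.z = 4 * n - 2

/-- `D(c)`: the set of trees of final configurations reachable from `c`. -/
def Dset (n : ℕ) (c : Config N) : Set (Finset (N × ℕ × ℕ)) :=
  {t' | ∃ c', Reaches n c c' ∧ Final n c' ∧ c'.t = t'}

/-- `(i,j) ⪯ (p,q)`: span `(i,j)` is encompassed by `(p,q)`, i.e. `p ≤ i < j ≤ q`. -/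
def Enc (s₁ s₂ : ℕ × ℕ) : Prop := s₂.1 ≤ s₁.1 ∧ s₁.1 < s₁.2 ∧ s₁.2 ≤ s₂.2

/-- `(i,j) ≺ (p,q)`: strict encompassment. -/
def SEnc (s₁ s₂ : ℕ × ℕ) : Prop := Enc s₁ s₂ ∧ s₁ ≠ s₂

/-- `tG` is a gold tree for sentence length `n`: valid spans, pairwise-distinct
spans, pairwise non-crossing spans, and exactly one bracket with span `(0, n)`
(uniqueness follows from distinctness of spans). -/
structure IsGold (n : ℕ) (tG : Finset (N × ℕ × ℕ)) : Prop where
  validSpans : ∀ b ∈ tG, (span b).1 < (span b).2 ∧ (span b).2 ≤ n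
  distinctSpans : ∀ b₁ ∈ tG, ∀ b₂ ∈ tG, span b₁ = span b₂ → b₁ = b₂
  noncrossing : ∀ b₁ ∈ tG, ∀ b₂ ∈ tG,
    Enc (span b₁) (span b₂) ∨ Enc (span b₂) (span b₁) ∨
    (span b₁).2 ≤ (span b₂).1 ∨ (span b₂).2 ≤ (span b₁).1
  root : ∃ X, (X, 0, n) ∈ tG

open Classical in
/-- `left(c)`: gold brackets (strictly, at even steps) encompassing the top
span whose left boundary occurs on the stack. -/
noncomputable def leftSet (tG : Finset (N × ℕ × ℕ)) (c : Config N) :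
    Finset (N × ℕ × ℕ) :=
  tG.filter fun b =>
    (if Even c.z then SEnc (topI c.σ, topJ c.σ) (span b)
     else Enc (topI c.σ, topJ c.σ) (span b)) ∧ (span b).1 ∈ c.σ

open Classical in
/-- `right(c)`: gold brackets entirely on the queue. -/
noncomputable def rightSet (tG : Finset (N × ℕ × ℕ)) (c : Config N) :
    Finset (N × ℕ × ℕ) :=
  tG.filter fun b => topJ c.σ ≤ (span b).1

open Classical in
/-- `reach(c)`: the reachable gold brackets (all of `t_G` at the initial
configuration, whose stack has fewer than two boundaries). -/
noncomputable def reach (tG : Finset (N × ℕ × ℕ)) (c : Config N) :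
    Finset (N × ℕ × ℕ) :=
  if c.σ.length < 2 then tG else leftSet tG c ∪ rightSet tG c

/-- The optimal tree `t*(c) = t ∪ reach(c)`. -/
noncomputable def tstar (tG : Finset (N × ℕ × ℕ)) (c : Config N) :
    Finset (N × ℕ × ℕ) :=
  c.t ∪ reach tG c

/-- `b = next(c)`: the `≺`-minimal element of `left(c)`. -/
def IsNext (tG : Finset (N × ℕ × ℕ)) (c : Config N) (b : N × ℕ × ℕ) : Prop :=
  b ∈ leftSet tG c ∧ ∀ b' ∈ leftSet tG c, Enc (span b) (span b')

/-- The dynamic-oracle policy `dyna(c)` as a predicate on actions. -/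
def Dyna (tG : Finset (N × ℕ × ℕ)) (c : Config N) (a : Action N) : Prop :=
  if c.σ.length < 2 then a = Action.sh
  else if Even c.z then
    ∃ b, IsNext tG c b ∧
      (((span b).1 = topI c.σ ∧ topJ c.σ < (span b).2 ∧ a = Action.sh) ∨
       ((span b).1 < topI c.σ ∧ (span b).2 = topJ c.σ ∧ a = Action.comb) ∨
       ((span b).1 < topI c.σ ∧ topJ c.σ < (span b).2 ∧
          (a = Action.sh ∨ a = Action.comb)))
  else
    (∃ X, (X, topI c.σ, topJ c.σ) ∈ tG ∧ a = Action.label X) ∨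
    ((∀ X, (X, topI c.σ, topJ c.σ) ∉ tG) ∧ a = Action.nolabel)

/-- `F1` of a predicted bracket set `t'` against the gold tree `tG`
(`0` when `t' ∩ tG = ∅`). -/
noncomputable def f1 (tG t' : Finset (N × ℕ × ℕ)) : ℝ :=
  if t' ∩ tG = ∅ then 0
  else
    (2 * (((t' ∩ tG).card : ℝ) / (tG.card : ℝ)) * (((t' ∩ tG).card : ℝ) / (t'.card : ℝ))) /
      ((((t' ∩ tG).card : ℝ) / (tG.card : ℝ)) + (((t' ∩ tG).card : ℝ) / (t'.card : ℝ)))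

/-- `F1(c)`: the best `F1` among trees reachable from `c`. -/
noncomputable def configF1 (n : ℕ) (tG : Finset (N × ℕ × ℕ)) (c : Config N) : ℝ :=
  sSup (f1 tG '' Dset n c)

/-- A run of (applicable) actions from one configuration to another. -/
inductive Run (n : ℕ) : Config N → List (Action N) → Config N → Prop
  | refl (c : Config N) : Run n c [] c
  | step {c c' : Config N} {as : List (Action N)} (a : Action N)
      (happ : App n c a) (h : Run n (doAct c a) as c') : Run n c (a :: as) c'

/-- A run all of whose actions follow the dynamic oracle. -/
inductive DynaRun (n : ℕ) (tG : Finset (N × ℕ × ℕ)) : Config N → Config N → Prop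
  | refl (c : Config N) : DynaRun n tG c c
  | step {c c' : Config N} (a : Action N) (happ : App n c a) (hdyna : Dyna tG c a)
      (h : DynaRun n tG (doAct c a) c') : DynaRun n tG c c'

def isSh : Action N → Bool
  | .sh => true
  | _ => false

def isComb : Action N → Bool
  | .comb => true
  | _ => false

/-- Label-step actions: `label-X` or `nolabel`. -/
def isLabelStep : Action N → Bool
  | .label _ => true
  | .nolabel => true
  | _ => false



-- Auxiliary lemmas -----------------------------------------------------------

@[simp] lemma topJ_concat (l : List ℕ) (a : ℕ) : topJ (l ++ [a]) = a :=
  List.getLastD_concat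

@[simp] lemma topJ_concat2 (l : List ℕ) (a b : ℕ) : topJ (l ++ [a, b]) = b := by
  rw [show l ++ [a, b] = (l ++ [a]) ++ [b] by simp, topJ_concat]

@[simp] lemma topJ_concat3 (l : List ℕ) (a b c : ℕ) : topJ (l ++ [a, b, c]) = c := by
  rw [show l ++ [a, b, c] = (l ++ [a, b]) ++ [c] by simp, topJ_concat]

@[simp] lemma dropLast_concat2 (l : List ℕ) (a b : ℕ) : (l ++ [a, b]).dropLast = l ++ [a] := by
  rw [show l ++ [a, b] = (l ++ [a]) ++ [b] by simp, List.dropLast_concat]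

@[simp] lemma dropLast_concat3 (l : List ℕ) (a b c : ℕ) :
    (l ++ [a, b, c]).dropLast = l ++ [a, b] := by
  rw [show l ++ [a, b, c] = (l ++ [a, b]) ++ [c] by simp, List.dropLast_concat]

@[simp] lemma topI_concat2 (l : List ℕ) (a b : ℕ) : topI (l ++ [a, b]) = a := by
  rw [topI, dropLast_concat2]; exact List.getLastD_concat

@[simp] lemma topI_concat3 (l : List ℕ) (a b c : ℕ) : topI (l ++ [a, b, c]) = b := by
  rw [topI, dropLast_concat3, show l ++ [a, b] = (l ++ [a]) ++ [b] by simp]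
  exact List.getLastD_concat

lemma le_getLastD_of_mem {l : List ℕ} (hs : l.Pairwise (· < ·)) {y : ℕ} (hy : y ∈ l) :
    y ≤ l.getLastD 0 := by
  induction l using List.reverseRecOn with
  | nil => simp at hy
  | append_singleton l x ih =>
    rw [List.getLastD_concat]
    rcases List.mem_append.1 hy with h | h
    · exact le_of_lt ((List.pairwise_append.1 hs).2.2 y h x (by simp))
    · simp at h; omega

lemma le_topJ_of_mem {l : List ℕ} (hs : l.Pairwise (· < ·)) {y : ℕ} (hy : y ∈ l) :
    y ≤ topJ l := le_getLastD_of_mem hs hy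

lemma exists_concat2 {l : List ℕ} (h : 2 ≤ l.length) : ∃ l' a b, l = l' ++ [a, b] := by
  match hl : l.reverse with
  | [] => rw [← l.reverse_reverse, hl] at h; simp at h
  | [b] => rw [← l.reverse_reverse, hl] at h; simp at h
  | b :: a :: t => exact ⟨t.reverse, a, b, by rw [← l.reverse_reverse, hl]; simp⟩

lemma exists_concat3 {l : List ℕ} (h : 3 ≤ l.length) : ∃ l' a b c, l = l' ++ [a, b, c] := by
  match hl : l.reverse with
  | [] => rw [← l.reverse_reverse, hl] at h; simp at h
  | [c] => rw [← l.reverse_reverse, hl] at h; simp at h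
  | [c, b] => rw [← l.reverse_reverse, hl] at h; simp at h
  | c :: b :: a :: t => exact ⟨t.reverse, a, b, c, by rw [← l.reverse_reverse, hl]; simp⟩

lemma valid_sorted {n : ℕ} {c : Config N} (hc : Valid n c) :
    c.σ ≠ [] ∧ c.σ.Pairwise (· < ·) := by
  induction hc with
  | refl => exact ⟨by simp [initial], by simp [initial]⟩
  | tail _ hstep ih =>
    obtain ⟨a, happ, rfl⟩ := hstep
    obtain ⟨hne, hs⟩ := ih
    rename_i b _
    cases a with
    | sh =>
      refine ⟨by simp [doAct], ?_⟩
      show (b.σ ++ [topJ b.σ + 1]).Pairwise (· < ·)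
      rw [List.pairwise_append]
      refine ⟨hs, by simp, ?_⟩
      intro x hx y hy
      simp only [List.mem_singleton] at hy; subst hy
      exact Nat.lt_succ_of_le (le_topJ_of_mem hs hx)
    | comb =>
      obtain ⟨l, i, k, j, hσ⟩ := exists_concat3 happ.2
      refine ⟨by simp [doAct], ?_⟩
      show ((b.σ).dropLast.dropLast ++ [topJ b.σ]).Pairwise (· < ·)
      rw [hσ] at hs ⊢
      simp only [dropLast_concat3, dropLast_concat2, topJ_concat3]
      have hmem : ∀ x ∈ l, x < i :=
        fun x hx => (List.pairwise_append.1 hs).2.2 x hx i (by simp)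
      have p := (List.pairwise_append.1 hs).2.1
      have hik : i < k := (List.pairwise_cons.1 p).1 k (by simp)
      have hkj : k < j := (List.pairwise_cons.1 (List.pairwise_cons.1 p).2).1 j (by simp)
      have hij : i < j := lt_trans hik hkj
      refine List.pairwise_append.2 ⟨List.pairwise_append.2
        ⟨(List.pairwise_append.1 hs).1, by simp, fun x hx y hy => ?_⟩,
        by simp, fun x hx y hy => ?_⟩
      · rcases (by simpa using hy : y = i) with rfl
        exact hmem x hx
      · rcases (by simpa using hy : y = j) with rfl
        rcases List.mem_append.1 hx with h | h
        · exact lt_trans (hmem x h) hij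
        · rcases (by simpa using h : x = i) with rfl
          exact hij
    | label X => exact ⟨hne, hs⟩
    | nolabel => exact ⟨hne, hs⟩


lemma reach_subset (tG : Finset (N × ℕ × ℕ)) (c : Config N) : reach tG c ⊆ tG := by
  classical
  rw [reach]
  split
  · exact subset_rfl
  · unfold leftSet rightSet
    exact Finset.union_subset (fun b hb => (Finset.mem_filter.1 hb).1)
      (fun b hb => (Finset.mem_filter.1 hb).1)

lemma mem_reach (tG : Finset (N × ℕ × ℕ)) (c : Config N) (h2 : 2 ≤ c.σ.length)
    (b : N × ℕ × ℕ) :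
    b ∈ reach tG c ↔ b ∈ tG ∧
      (((if Even c.z then SEnc (topI c.σ, topJ c.σ) (span b)
          else Enc (topI c.σ, topJ c.σ) (span b)) ∧ (span b).1 ∈ c.σ) ∨
        topJ c.σ ≤ (span b).1) := by
  classical
  rw [reach, if_neg (not_lt.2 h2), leftSet, rightSet]
  constructor
  · intro h
    rcases Finset.mem_union.1 h with h | h
    · obtain ⟨h1, h2'⟩ := Finset.mem_filter.1 h
      exact ⟨h1, Or.inl h2'⟩
    · obtain ⟨h1, h2'⟩ := Finset.mem_filter.1 h
      exact ⟨h1, Or.inr h2'⟩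
  · rintro ⟨h1, h | h⟩
    · exact Finset.mem_union_left _ (Finset.mem_filter.2 ⟨h1, h⟩)
    · exact Finset.mem_union_right _ (Finset.mem_filter.2 ⟨h1, h⟩)

/-- Monotonicity of reachable gold brackets: no transition from a valid
configuration can ever add new reachable gold brackets:
`reach(τ(c)) ⊆ reach(c)` for every action `τ` applicable at `c`. -/
theorem reach_monotone (n : ℕ) (hn : 1 ≤ n) (tG : Finset (N × ℕ × ℕ))
    (hG : IsGold n tG) (c : Config N) (hc : Valid n c)
    (a : Action N) (happ : App n c a) :
    reach tG (doAct c a) ⊆ reach tG c := by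
  obtain ⟨hne, hsort⟩ := valid_sorted hc
  cases a with
  | sh =>
    obtain ⟨hev, -, -⟩ := happ
    by_cases hlen : c.σ.length < 2
    · intro b hb
      have : reach tG c = tG := by rw [reach, if_pos hlen]
      rw [this]
      exact reach_subset tG _ hb
    · obtain ⟨l, i, j, hσ⟩ := exists_concat2 (not_lt.1 hlen)
      have hps := List.pairwise_append.1 (hσ ▸ hsort)
      have hmem : ∀ x ∈ l, x < i := fun x hx => hps.2.2 x hx i (by simp)
      have hij : i < j := (List.pairwise_cons.1 hps.2.1).1 j (by simp)
      have hσ' : (doAct c Action.sh).σ = (l ++ [i]) ++ [j, j + 1] := by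
        simp [doAct, hσ]
      intro b hb
      rw [mem_reach tG _ (by rw [hσ']; simp) b] at hb
      rw [mem_reach tG c (by rw [hσ]; simp) b, hσ]
      obtain ⟨hbG, hcase⟩ := hb
      refine ⟨hbG, ?_⟩
      rw [hσ'] at hcase
      simp only [topI_concat2, topJ_concat2, topJ_concat3] at hcase ⊢
      have hz' : ¬ Even (doAct c Action.sh).z := by
        simp [doAct, Nat.even_add_one, hev]
      rw [if_neg hz'] at hcase
      rw [if_pos hev]
      rcases hcase with ⟨henc, hp⟩ | hr
      · obtain ⟨h1, -, h3⟩ := henc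
        by_cases hpj : j ≤ (span b).1
        · exact Or.inr hpj
        · left
          have hpl : (span b).1 ∈ l ∨ (span b).1 = i := by
            have := hp
            simp only [List.mem_append, List.mem_cons, List.mem_singleton] at this
            rcases this with (h | h) | h
            · exact Or.inl h
            · exact Or.inr (by simpa using h)
            · simp only [List.not_mem_nil, or_false] at h
              rcases h with h | h <;> omega
          have hpi : (span b).1 ≤ i := by
            rcases hpl with h | h
            · exact le_of_lt (hmem _ h)
            · omega
          refine ⟨⟨⟨hpi, hij, by omega⟩, ?_⟩, ?_⟩
          · simp only [ne_eq, Prod.ext_iff]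
            omega
          · simp only [List.mem_append, List.mem_cons, List.mem_singleton]
            tauto
      · exact Or.inr (by omega)
  | comb =>
    obtain ⟨hev, hlen⟩ := happ
    obtain ⟨l, i, k, j, hσ⟩ := exists_concat3 hlen
    have hps := List.pairwise_append.1 (hσ ▸ hsort)
    have hmem : ∀ x ∈ l, x < i := fun x hx => hps.2.2 x hx i (by simp)
    have hik : i < k := (List.pairwise_cons.1 hps.2.1).1 k (by simp)
    have hkj : k < j :=
      (List.pairwise_cons.1 (List.pairwise_cons.1 hps.2.1).2).1 j (by simp)
    have hσ' : (doAct c Action.comb).σ = l ++ [i, j] := by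
      simp [doAct, hσ]
    intro b hb
    rw [mem_reach tG _ (by rw [hσ']; simp) b] at hb
    rw [mem_reach tG c (by rw [hσ]; simp) b, hσ]
    obtain ⟨hbG, hcase⟩ := hb
    refine ⟨hbG, ?_⟩
    rw [hσ'] at hcase
    simp only [topI_concat2, topJ_concat2, topI_concat3, topJ_concat3] at hcase ⊢
    have hz' : ¬ Even (doAct c Action.comb).z := by
      simp [doAct, Nat.even_add_one, hev]
    rw [if_neg hz'] at hcase
    rw [if_pos hev]
    rcases hcase with ⟨henc, hp⟩ | hr
    · obtain ⟨h1, h2, h3⟩ := henc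
      left
      have hpl : (span b).1 ∈ l ∨ (span b).1 = i := by
        simp only [List.mem_append, List.mem_cons, List.mem_singleton] at hp
        rcases hp with h | h | h
        · exact Or.inl h
        · exact Or.inr h
        · simp only [List.not_mem_nil, or_false] at h
          omega
      have hpi : (span b).1 ≤ i := by
        rcases hpl with h | h
        · exact le_of_lt (hmem _ h)
        · omega
      refine ⟨⟨⟨by omega, by omega, h3⟩, ?_⟩, ?_⟩
      · simp only [ne_eq, Prod.ext_iff]
        omega
      · simp only [List.mem_append, List.mem_cons, List.mem_singleton]
        tauto
    · exact Or.inr hr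
  | label X =>
    obtain ⟨hodd, hlen⟩ := happ
    have hσ' : (doAct c (Action.label X)).σ = c.σ := rfl
    intro b hb
    rw [mem_reach tG _ (by rw [hσ']; exact hlen) b] at hb
    rw [mem_reach tG c hlen b]
    obtain ⟨hbG, hcase⟩ := hb
    refine ⟨hbG, ?_⟩
    rw [hσ'] at hcase
    have hz' : Even (doAct c (Action.label X)).z := by
      simpa [doAct, Nat.even_add_one] using Nat.not_even_iff_odd.2 hodd
    rw [if_pos hz'] at hcase
    rw [if_neg (Nat.not_even_iff_odd.2 hodd)]
    rcases hcase with ⟨henc, hp⟩ | hr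
    · exact Or.inl ⟨henc.1, hp⟩
    · exact Or.inr hr
  | nolabel =>
    obtain ⟨hodd, hlen, -⟩ := happ
    have hσ' : (doAct c Action.nolabel).σ = c.σ := rfl
    intro b hb
    rw [mem_reach tG _ (by rw [hσ']; exact hlen) b] at hb
    rw [mem_reach tG c hlen b]
    obtain ⟨hbG, hcase⟩ := hb
    refine ⟨hbG, ?_⟩
    rw [hσ'] at hcase
    have hz' : Even (doAct c Action.nolabel).z := by
      simpa [doAct, Nat.even_add_one] using Nat.not_even_iff_odd.2 hodd
    rw [if_pos hz'] at hcase
    rw [if_neg (Nat.not_even_iff_odd.2 hodd)]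
    rcases hcase with ⟨henc, hp⟩ | hr
    · exact Or.inl ⟨henc.1, hp⟩
    · exact Or.inr hr


end SpanParser
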